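/- arXiv:math/0702481 — 2 statements merged into one kernel-verified Lean document; each statement's English description precedes it below -/
import Mathlib

section
/- As β → 0⁺, the limiting variance of the one-dimensional Dunkel–Hänggi relativistic diffusion satisfies Σ_β² ∼ A / log(1/β) for the explicit positive constant A := 2 ∫₀^∞ ( ∫_x^∞ e^{−u} u^{−1} du )² eˣ dx; that is, lim_{β→0⁺} log(1/β) · K_β / J_β = A. -/
open Filter MeasureTheory Set

noncomputable def gg (β u : ℝ) : ℝ := u * Real.exp (β - Real.sqrt (β^2 + u^2)) / (β^2 + u^2)

noncomputable def E1 (t : ℝ) : ℝ := ∫ u in Ioi t, Real.exp (-u) * u⁻¹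

lemma gg_nonneg {β u : ℝ} (hu : 0 ≤ u) : 0 ≤ gg β u := by
  unfold gg; positivity

lemma continuous_gg {β : ℝ} (hβ : 0 < β) : Continuous (gg β) := by
  have h1 : Continuous fun u : ℝ => β^2 + u^2 := by continuity
  have h2 : Continuous fun u : ℝ => u * Real.exp (β - Real.sqrt (β^2 + u^2)) :=
    continuous_id.mul (Real.continuous_exp.comp (continuous_const.sub
      (Real.continuous_sqrt.comp h1)))
  exact h2.div h1 fun u => by positivity

lemma gg_le {β u : ℝ} (hβ0 : 0 < β) (hβ1 : β ≤ 1) (hu : 0 < u) :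
    gg β u ≤ Real.exp 1 * (Real.exp (-u) * u⁻¹) := by
  have hsq : u ≤ Real.sqrt (β^2 + u^2) :=
    (Real.le_sqrt hu.le (by positivity)).mpr (by nlinarith [sq_nonneg β])
  have h1 : gg β u ≤ u * Real.exp (1 - u) / u^2 := by
    unfold gg
    apply div_le_div₀ (by positivity) _ (by positivity) (by nlinarith)
    have : β - Real.sqrt (β^2 + u^2) ≤ 1 - u := by linarith
    exact mul_le_mul_of_nonneg_left (Real.exp_le_exp.2 this) hu.le
  calc gg β u ≤ u * Real.exp (1 - u) / u^2 := h1
    _ = Real.exp 1 * (Real.exp (-u) * u⁻¹) := by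
        rw [show (1:ℝ) - u = 1 + -u from by ring, Real.exp_add]
        field_simp

lemma exp_neg_mul_int {t : ℝ} : IntegrableOn (fun u : ℝ => Real.exp (-u)) (Ioi t) := by
  have := exp_neg_integrableOn_Ioi t (one_pos (α := ℝ))
  simpa using this

lemma E1_integrand_int {t : ℝ} (ht : 0 < t) :
    IntegrableOn (fun u : ℝ => Real.exp (-u) * u⁻¹) (Ioi t) := by
  apply Integrable.mono' (exp_neg_mul_int.const_mul t⁻¹)
  · apply (Real.measurable_exp.comp measurable_neg).aemeasurable.aestronglyMeasurable.mul
    exact (measurable_id.inv : Measurable fun u : ℝ => u⁻¹).aestronglyMeasurable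
  · filter_upwards [ae_restrict_mem measurableSet_Ioi] with u hu
    have hu0 : 0 < u := ht.trans hu
    rw [Real.norm_eq_abs, abs_of_nonneg (by positivity)]
    rw [mul_comm (t⁻¹)]
    apply mul_le_mul_of_nonneg_left _ (Real.exp_pos _).le
    exact inv_anti₀ ht (le_of_lt hu)

lemma E1_nonneg {t : ℝ} (ht : 0 < t) : 0 ≤ E1 t := by
  apply setIntegral_nonneg measurableSet_Ioi
  intro u hu
  have : 0 < u := ht.trans hu
  positivity

lemma gg_int {β t : ℝ} (hβ0 : 0 < β) (hβ1 : β ≤ 1) (ht : 0 < t) :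
    IntegrableOn (gg β) (Ioi t) := by
  apply Integrable.mono' ((E1_integrand_int ht).const_mul (Real.exp 1))
  · exact (continuous_gg hβ0).aestronglyMeasurable
  · filter_upwards [ae_restrict_mem measurableSet_Ioi] with u hu
    rw [Real.norm_eq_abs, abs_of_nonneg (gg_nonneg (ht.trans hu).le)]
    exact gg_le hβ0 hβ1 (ht.trans hu)

lemma setIntegral_gg_le {β t : ℝ} (hβ0 : 0 < β) (hβ1 : β ≤ 1) (ht : 0 < t) :
    ∫ u in Ioi t, gg β u ≤ Real.exp 1 * E1 t := by
  rw [E1, ← integral_const_mul]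
  apply setIntegral_mono_on (gg_int hβ0 hβ1 ht) ((E1_integrand_int ht).const_mul _)
    measurableSet_Ioi
  intro u hu
  exact gg_le hβ0 hβ1 (ht.trans hu)

lemma setIntegral_gg_nonneg {β t : ℝ} (ht : 0 < t) : 0 ≤ ∫ u in Ioi t, gg β u := by
  apply setIntegral_nonneg measurableSet_Ioi
  intro u hu
  exact gg_nonneg (ht.trans hu).le
noncomputable def FF (β t : ℝ) : ℝ :=
  (∫ u in Ioi t, gg β u) ^ 2 * Real.exp (Real.sqrt (β^2 + t^2) - β)

lemma sqrt_beta_sq {β y : ℝ} (hβ : 0 ≤ β) :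
    Real.sqrt (β^2 + (β*y)^2) = β * Real.sqrt (1 + y^2) := by
  rw [show β^2 + (β*y)^2 = β^2 * (1 + y^2) from by ring, Real.sqrt_mul (sq_nonneg β),
    Real.sqrt_sq hβ]

lemma inner_cov {β : ℝ} (hβ : 0 < β) (x : ℝ) :
    (∫ y in Ioi x, y * Real.exp (β * (1 - Real.sqrt (1 + y ^ 2))) / (1 + y ^ 2))
      = ∫ u in Ioi (β * x), gg β u := by
  have key : ∀ y : ℝ, y * Real.exp (β * (1 - Real.sqrt (1 + y ^ 2))) / (1 + y ^ 2)
      = β * gg β (β * y) := by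
    intro y
    unfold gg
    rw [sqrt_beta_sq hβ.le, show β - β * Real.sqrt (1 + y^2) = β * (1 - Real.sqrt (1 + y^2))
      from by ring, show β^2 + (β*y)^2 = β^2 * (1 + y^2) from by ring]
    have h1 : (1:ℝ) + y^2 ≠ 0 := by positivity
    field_simp
  simp_rw [key]
  rw [integral_const_mul, integral_comp_mul_left_Ioi (gg β) x hβ, smul_eq_mul, ← mul_assoc,
    mul_inv_cancel₀ hβ.ne', one_mul]

lemma outer_cov {β : ℝ} (hβ : 0 < β) :
    (2 * β * ∫ x in Ioi (0:ℝ),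
        (∫ y in Ioi x, y * Real.exp (β * (1 - Real.sqrt (1 + y ^ 2))) / (1 + y ^ 2)) ^ 2
          * Real.exp (β * (Real.sqrt (1 + x ^ 2) - 1)))
      = 2 * ∫ t in Ioi (0:ℝ), FF β t := by
  have key : ∀ x : ℝ,
      (∫ y in Ioi x, y * Real.exp (β * (1 - Real.sqrt (1 + y ^ 2))) / (1 + y ^ 2)) ^ 2
        * Real.exp (β * (Real.sqrt (1 + x ^ 2) - 1)) = FF β (β * x) := by
    intro x
    unfold FF
    rw [inner_cov hβ x, sqrt_beta_sq hβ.le, show β * Real.sqrt (1 + x^2) - β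
      = β * (Real.sqrt (1 + x^2) - 1) from by ring]
  simp_rw [key]
  rw [integral_comp_mul_left_Ioi (FF β) 0 hβ, mul_zero, smul_eq_mul]
  field_simp

lemma tendsto_inner {t : ℝ} (ht : 0 < t) :
    Tendsto (fun β => ∫ u in Ioi t, gg β u) (nhdsWithin 0 (Ioi 0)) (nhds (E1 t)) := by
  have hmem : ∀ᶠ β : ℝ in nhdsWithin 0 (Ioi 0), β ∈ Ioo (0:ℝ) 1 :=
    Ioo_mem_nhdsGT_of_mem ⟨le_refl 0, one_pos⟩
  apply tendsto_integral_filter_of_dominated_convergence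
    (fun u => Real.exp 1 * (Real.exp (-u) * u⁻¹))
  · filter_upwards [hmem] with β hβ
    exact (continuous_gg hβ.1).aestronglyMeasurable
  · filter_upwards [hmem] with β hβ
    filter_upwards [ae_restrict_mem measurableSet_Ioi] with u hu
    rw [Real.norm_eq_abs, abs_of_nonneg (gg_nonneg (ht.trans hu).le)]
    exact gg_le hβ.1 hβ.2.le (ht.trans hu)
  · exact (E1_integrand_int ht).const_mul _
  · filter_upwards [ae_restrict_mem measurableSet_Ioi] with u hu
    have hu0 : 0 < u := ht.trans hu
    have hc : Continuous fun β : ℝ => gg β u := by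
      have h1 : Continuous fun β : ℝ => β^2 + u^2 := by continuity
      have h2 : Continuous fun β : ℝ => u * Real.exp (β - Real.sqrt (β^2 + u^2)) :=
        continuous_const.mul (Real.continuous_exp.comp (continuous_id.sub
          (Real.continuous_sqrt.comp h1)))
      exact h2.div h1 fun β => by positivity
    have h0 : gg 0 u = Real.exp (-u) * u⁻¹ := by
      unfold gg
      rw [show (0:ℝ)^2 + u^2 = u^2 from by ring, Real.sqrt_sq hu0.le]
      field_simp
      ring
    have := hc.tendsto 0
    rw [h0] at this
    exact this.mono_left nhdsWithin_le_nhds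

lemma tendsto_FF {t : ℝ} (ht : 0 < t) :
    Tendsto (fun β => FF β t) (nhdsWithin 0 (Ioi 0)) (nhds ((E1 t)^2 * Real.exp t)) := by
  apply Tendsto.mul (((tendsto_inner ht).pow 2))
  have hc : Continuous fun β : ℝ => Real.exp (Real.sqrt (β^2 + t^2) - β) := by
    have h1 : Continuous fun β : ℝ => β^2 + t^2 := by continuity
    exact Real.continuous_exp.comp ((Real.continuous_sqrt.comp h1).sub continuous_id)
  have := hc.tendsto 0
  rw [show Real.sqrt ((0:ℝ)^2 + t^2) - 0 = t from by
    rw [show (0:ℝ)^2 + t^2 = t^2 from by ring, Real.sqrt_sq ht.le]; ring] at this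
  exact this.mono_left nhdsWithin_le_nhds
lemma E1_integrand_nonneg_ae {t : ℝ} (ht : 0 ≤ t) :
    0 ≤ᵐ[volume.restrict (Ioi t)] fun u : ℝ => Real.exp (-u) * u⁻¹ := by
  filter_upwards [ae_restrict_mem measurableSet_Ioi] with u hu
  have : 0 < u := lt_of_le_of_lt ht hu
  positivity

lemma E1_le_log {t : ℝ} (ht0 : 0 < t) (ht1 : t ≤ 1) : E1 t ≤ 1 - Real.log t := by
  have hint := E1_integrand_int ht0
  have h1 : IntegrableOn (fun u : ℝ => Real.exp (-u) * u⁻¹) (Ioc t 1) :=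
    hint.mono_set Ioc_subset_Ioi_self
  have h2 : IntegrableOn (fun u : ℝ => Real.exp (-u) * u⁻¹) (Ioi 1) :=
    E1_integrand_int one_pos
  have hsplit : E1 t = (∫ u in Ioc t 1, Real.exp (-u) * u⁻¹)
      + ∫ u in Ioi (1:ℝ), Real.exp (-u) * u⁻¹ := by
    rw [E1, ← setIntegral_union (Ioc_disjoint_Ioi le_rfl) measurableSet_Ioi h1 h2,
      Ioc_union_Ioi_eq_Ioi ht1]
  have hinv : IntegrableOn (fun u : ℝ => u⁻¹) (Ioc t 1) := by
    have : IntervalIntegrable (fun u : ℝ => u⁻¹) volume t 1 := by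
      apply intervalIntegral.intervalIntegrable_inv _ continuousOn_id
      intro x hx
      rcases hx with ⟨hx1, _⟩
      have : 0 < x := lt_of_lt_of_le (lt_min ht0 one_pos) hx1
      exact this.ne'
    exact this.1
  have hA : (∫ u in Ioc t 1, Real.exp (-u) * u⁻¹) ≤ ∫ u in Ioc t 1, u⁻¹ := by
    apply setIntegral_mono_on h1 hinv measurableSet_Ioc
    intro u hu
    have hu0 : 0 < u := ht0.trans hu.1
    calc Real.exp (-u) * u⁻¹ ≤ 1 * u⁻¹ := by
          apply mul_le_mul_of_nonneg_right _ (by positivity)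
          rw [show (1:ℝ) = Real.exp 0 from Real.exp_zero.symm]
          exact Real.exp_le_exp.2 (by linarith)
      _ = u⁻¹ := one_mul _
  have hA2 : (∫ u in Ioc t 1, (u : ℝ)⁻¹) = - Real.log t := by
    rw [← intervalIntegral.integral_of_le ht1, integral_inv (by
      rw [Set.uIcc_of_le ht1]; intro h; exact absurd h.1 (not_le.2 ht0))]
    rw [one_div, Real.log_inv]
  have hB : (∫ u in Ioi (1:ℝ), Real.exp (-u) * u⁻¹) ≤ 1 := by
    calc (∫ u in Ioi (1:ℝ), Real.exp (-u) * u⁻¹) ≤ ∫ u in Ioi (1:ℝ), Real.exp (-u) := by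
          apply setIntegral_mono_on h2 exp_neg_mul_int measurableSet_Ioi
          intro u hu
          calc Real.exp (-u) * u⁻¹ ≤ Real.exp (-u) * 1 := by
                apply mul_le_mul_of_nonneg_left _ (Real.exp_pos _).le
                rw [inv_le_one_iff₀]
                right; exact hu.le
            _ = Real.exp (-u) := mul_one _
      _ = Real.exp (-1) := integral_exp_neg_Ioi 1
      _ ≤ 1 := by rw [Real.exp_le_one_iff]; norm_num
  linarith [hsplit, hA, hA2, hB]

lemma E1_le_exp_neg {t : ℝ} (ht : 1 ≤ t) : E1 t ≤ Real.exp (-t) := by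
  have ht0 : 0 < t := lt_of_lt_of_le one_pos ht
  calc E1 t ≤ ∫ u in Ioi t, Real.exp (-u) := by
        apply setIntegral_mono_on (E1_integrand_int ht0) exp_neg_mul_int measurableSet_Ioi
        intro u hu
        calc Real.exp (-u) * u⁻¹ ≤ Real.exp (-u) * 1 := by
              apply mul_le_mul_of_nonneg_left _ (Real.exp_pos _).le
              rw [inv_le_one_iff₀]
              right; exact ht.trans hu.le
          _ = Real.exp (-u) := mul_one _
    _ = Real.exp (-t) := integral_exp_neg_Ioi t

lemma E1_aemeas : AEMeasurable E1 (volume.restrict (Ioi (0:ℝ))) := by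
  apply aemeasurable_restrict_of_antitoneOn measurableSet_Ioi
  intro x hx y hy hxy
  exact setIntegral_mono_set (E1_integrand_int hx) (E1_integrand_nonneg_ae hx.le)
    (HasSubset.Subset.eventuallyLE (Ioi_subset_Ioi hxy))

lemma bound_int : IntegrableOn (fun t : ℝ => E1 t ^ 2 * Real.exp t) (Ioi 0) := by
  rw [← Ioc_union_Ioi_eq_Ioi (zero_le_one (α := ℝ))]
  apply IntegrableOn.union
  · -- on Ioc 0 1
    have hmeas : AEStronglyMeasurable (fun t : ℝ => E1 t ^ 2 * Real.exp t)
        (volume.restrict (Ioc 0 1)) := by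
      have h : AEMeasurable E1 (volume.restrict (Ioc (0:ℝ) 1)) :=
        E1_aemeas.mono_measure (Measure.restrict_mono Ioc_subset_Ioi_self le_rfl)
      exact ((h.pow_const 2).mul (Real.continuous_exp.measurable.aemeasurable)).aestronglyMeasurable
    apply Integrable.mono' (g := fun t : ℝ => (25 * Real.exp 1) * t ^ (-(1/2) : ℝ)) _ hmeas
    · filter_upwards [ae_restrict_mem measurableSet_Ioc] with t ht
      have ht0 : 0 < t := ht.1
      have ht1 : t ≤ 1 := ht.2
      have ha0 : (0:ℝ) < t ^ (-(1/4) : ℝ) := Real.rpow_pos_of_pos ht0 _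
      have ha1 : (1:ℝ) ≤ t ^ (-(1/4) : ℝ) :=
        Real.one_le_rpow_of_pos_of_le_one_of_nonpos ht0 ht1 (by norm_num)
      have hlog : - Real.log t = 4 * Real.log (t ^ (-(1/4) : ℝ)) := by
        rw [Real.log_rpow ht0]; ring
      have hloga : Real.log (t ^ (-(1/4) : ℝ)) ≤ t ^ (-(1/4) : ℝ) := by
        have := Real.log_le_sub_one_of_pos ha0
        linarith
      have hE : E1 t ≤ 5 * t ^ (-(1/4) : ℝ) := by
        have := E1_le_log ht0 ht1
        nlinarith
      have hEsq : E1 t ^ 2 ≤ 25 * t ^ (-(1/2) : ℝ) := by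
        have h1 : E1 t ^ 2 ≤ (5 * t ^ (-(1/4) : ℝ)) ^ 2 :=
          pow_le_pow_left₀ (E1_nonneg ht0) hE 2
        have h2 : (t ^ (-(1/4) : ℝ)) ^ 2 = t ^ (-(1/2) : ℝ) := by
          rw [sq, ← Real.rpow_add ht0]; norm_num
        nlinarith [h2]
      have hexp : Real.exp t ≤ Real.exp 1 := Real.exp_le_exp.2 ht1
      rw [Real.norm_eq_abs, abs_of_nonneg (by positivity)]
      calc E1 t ^ 2 * Real.exp t ≤ (25 * t ^ (-(1/2) : ℝ)) * Real.exp 1 := by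
            apply mul_le_mul hEsq hexp (Real.exp_pos _).le (by positivity)
        _ = (25 * Real.exp 1) * t ^ (-(1/2) : ℝ) := by ring
    · have : IntervalIntegrable (fun t : ℝ => t ^ (-(1/2) : ℝ)) volume 0 1 :=
        intervalIntegral.intervalIntegrable_rpow' (by norm_num)
      exact (this.1).const_mul _
  · -- on Ioi 1
    have hmeas : AEStronglyMeasurable (fun t : ℝ => E1 t ^ 2 * Real.exp t)
        (volume.restrict (Ioi 1)) := by
      have h : AEMeasurable E1 (volume.restrict (Ioi (1:ℝ))) :=
        E1_aemeas.mono_measure (Measure.restrict_mono (Ioi_subset_Ioi zero_le_one) le_rfl)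
      exact ((h.pow_const 2).mul (Real.continuous_exp.measurable.aemeasurable)).aestronglyMeasurable
    apply Integrable.mono' (g := fun t : ℝ => Real.exp (-t)) exp_neg_mul_int hmeas
    filter_upwards [ae_restrict_mem measurableSet_Ioi] with t ht
    have ht0 : (0:ℝ) < t := lt_trans one_pos ht
    rw [Real.norm_eq_abs, abs_of_nonneg (by positivity)]
    have h1 : E1 t ^ 2 ≤ Real.exp (-t) ^ 2 :=
      pow_le_pow_left₀ (E1_nonneg ht0) (E1_le_exp_neg ht.le) 2
    calc E1 t ^ 2 * Real.exp t ≤ Real.exp (-t) ^ 2 * Real.exp t :=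
          mul_le_mul_of_nonneg_right h1 (Real.exp_pos _).le
      _ = Real.exp (-t) := by
          rw [sq, ← Real.exp_add, ← Real.exp_add]; ring_nf
lemma FF_aesm {β : ℝ} (hβ0 : 0 < β) (hβ1 : β ≤ 1) :
    AEStronglyMeasurable (FF β) (volume.restrict (Ioi (0:ℝ))) := by
  have hΦ : AEMeasurable (fun t : ℝ => ∫ u in Ioi t, gg β u) (volume.restrict (Ioi (0:ℝ))) := by
    apply aemeasurable_restrict_of_antitoneOn measurableSet_Ioi
    intro x hx y hy hxy
    apply setIntegral_mono_set (gg_int hβ0 hβ1 hx) _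
      (HasSubset.Subset.eventuallyLE (Ioi_subset_Ioi hxy))
    filter_upwards [ae_restrict_mem measurableSet_Ioi] with u hu
    exact gg_nonneg (hx.trans hu).le
  have hc : Continuous fun t : ℝ => Real.exp (Real.sqrt (β^2 + t^2) - β) := by
    have h1 : Continuous fun t : ℝ => β^2 + t^2 := by continuity
    exact Real.continuous_exp.comp ((Real.continuous_sqrt.comp h1).sub continuous_const)
  exact ((hΦ.pow_const 2).mul hc.measurable.aemeasurable).aestronglyMeasurable

lemma FF_le {β t : ℝ} (hβ0 : 0 < β) (hβ1 : β ≤ 1) (ht : 0 < t) :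
    FF β t ≤ Real.exp 1 ^ 2 * (E1 t ^ 2 * Real.exp t) := by
  unfold FF
  have h1 : (∫ u in Ioi t, gg β u) ^ 2 ≤ (Real.exp 1 * E1 t) ^ 2 :=
    pow_le_pow_left₀ (setIntegral_gg_nonneg ht) (setIntegral_gg_le hβ0 hβ1 ht) 2
  have h2 : Real.exp (Real.sqrt (β^2 + t^2) - β) ≤ Real.exp t := by
    apply Real.exp_le_exp.2
    have : Real.sqrt (β^2 + t^2) ≤ β + t := by
      rw [show β + t = Real.sqrt ((β + t)^2) from (Real.sqrt_sq (by positivity)).symm]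
      exact Real.sqrt_le_sqrt (by nlinarith)
    linarith
  calc (∫ u in Ioi t, gg β u) ^ 2 * Real.exp (Real.sqrt (β^2 + t^2) - β)
      ≤ (Real.exp 1 * E1 t) ^ 2 * Real.exp t := by
        apply mul_le_mul h1 h2 (Real.exp_pos _).le (by positivity)
    _ = Real.exp 1 ^ 2 * (E1 t ^ 2 * Real.exp t) := by ring

lemma tendsto_K :
    Tendsto (fun β => ∫ t in Ioi (0:ℝ), FF β t) (nhdsWithin 0 (Ioi 0))
      (nhds (∫ t in Ioi (0:ℝ), E1 t ^ 2 * Real.exp t)) := by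
  have hmem : ∀ᶠ β : ℝ in nhdsWithin 0 (Ioi 0), β ∈ Ioo (0:ℝ) 1 :=
    Ioo_mem_nhdsGT_of_mem ⟨le_refl 0, one_pos⟩
  apply tendsto_integral_filter_of_dominated_convergence
    (fun t => Real.exp 1 ^ 2 * (E1 t ^ 2 * Real.exp t))
  · filter_upwards [hmem] with β hβ
    exact FF_aesm hβ.1 hβ.2.le
  · filter_upwards [hmem] with β hβ
    filter_upwards [ae_restrict_mem measurableSet_Ioi] with t ht
    have h0 : 0 ≤ FF β t := by
      unfold FF
      positivity
    rw [Real.norm_eq_abs, abs_of_nonneg h0]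
    exact FF_le hβ.1 hβ.2.le ht
  · exact bound_int.const_mul _
  · filter_upwards [ae_restrict_mem measurableSet_Ioi] with t ht
    exact tendsto_FF ht

noncomputable def JJ (β : ℝ) : ℝ :=
  ∫ z in Ioi (0:ℝ), Real.exp (β * (1 - Real.sqrt (1 + z ^ 2))) / Real.sqrt (1 + z ^ 2)

lemma sqrt_one_add_sq_pos {z : ℝ} : 0 < Real.sqrt (1 + z ^ 2) :=
  Real.sqrt_pos.2 (by positivity)

lemma one_le_sqrt_one_add_sq {z : ℝ} : 1 ≤ Real.sqrt (1 + z ^ 2) :=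
  (Real.le_sqrt zero_le_one (by positivity)).mpr (by nlinarith)

lemma le_sqrt_one_add_sq {z : ℝ} (hz : 0 ≤ z) : z ≤ Real.sqrt (1 + z ^ 2) :=
  (Real.le_sqrt hz (by positivity)).mpr (by nlinarith)

lemma sqrt_one_add_sq_le {z : ℝ} (hz : 0 ≤ z) : Real.sqrt (1 + z ^ 2) ≤ 1 + z := by
  calc Real.sqrt (1 + z ^ 2) ≤ Real.sqrt ((1 + z) ^ 2) := Real.sqrt_le_sqrt (by nlinarith)
    _ = 1 + z := Real.sqrt_sq (by positivity)

lemma J_integrand_nonneg {β z : ℝ} :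
    0 ≤ Real.exp (β * (1 - Real.sqrt (1 + z ^ 2))) / Real.sqrt (1 + z ^ 2) := by
  have := sqrt_one_add_sq_pos (z := z)
  positivity

lemma J_integrand_le_one {β z : ℝ} (hβ : 0 ≤ β) :
    Real.exp (β * (1 - Real.sqrt (1 + z ^ 2))) / Real.sqrt (1 + z ^ 2) ≤ 1 := by
  have h1 := one_le_sqrt_one_add_sq (z := z)
  have h2 : Real.exp (β * (1 - Real.sqrt (1 + z ^ 2))) ≤ 1 :=
    Real.exp_le_one_iff.2 (by nlinarith)
  calc Real.exp (β * (1 - Real.sqrt (1 + z ^ 2))) / Real.sqrt (1 + z ^ 2)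
      ≤ Real.exp (β * (1 - Real.sqrt (1 + z ^ 2))) / 1 :=
        div_le_div_of_nonneg_left (Real.exp_pos _).le one_pos h1
    _ ≤ 1 := by rw [div_one]; exact h2

lemma J_integrand_continuous {β : ℝ} :
    Continuous fun z : ℝ => Real.exp (β * (1 - Real.sqrt (1 + z ^ 2))) / Real.sqrt (1 + z ^ 2) := by
  have h1 : Continuous fun z : ℝ => 1 + z ^ 2 := by continuity
  have h2 : Continuous fun z : ℝ => Real.sqrt (1 + z ^ 2) := Real.continuous_sqrt.comp h1
  exact (Real.continuous_exp.comp (continuous_const.mul (continuous_const.sub h2))).div h2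
    fun z => sqrt_one_add_sq_pos.ne'

lemma J_int {β : ℝ} (hβ : 0 < β) :
    IntegrableOn (fun z : ℝ => Real.exp (β * (1 - Real.sqrt (1 + z ^ 2))) / Real.sqrt (1 + z ^ 2))
      (Ioi 0) := by
  apply Integrable.mono' (g := fun z : ℝ => Real.exp β * Real.exp (-(β * z)))
  · have := (exp_neg_integrableOn_Ioi 0 hβ).const_mul (Real.exp β)
    simpa [neg_mul] using this
  · exact J_integrand_continuous.aestronglyMeasurable
  · filter_upwards [ae_restrict_mem measurableSet_Ioi] with z hz
    rw [Real.norm_eq_abs, abs_of_nonneg J_integrand_nonneg]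
    have h1 := one_le_sqrt_one_add_sq (z := z)
    have h2 := le_sqrt_one_add_sq (le_of_lt hz)
    calc Real.exp (β * (1 - Real.sqrt (1 + z ^ 2))) / Real.sqrt (1 + z ^ 2)
        ≤ Real.exp (β * (1 - Real.sqrt (1 + z ^ 2))) / 1 :=
          div_le_div_of_nonneg_left (Real.exp_pos _).le one_pos h1
      _ = Real.exp (β * (1 - Real.sqrt (1 + z ^ 2))) := div_one _
      _ ≤ Real.exp β * Real.exp (-(β * z)) := by
          rw [← Real.exp_add]
          apply Real.exp_le_exp.2
          nlinarith
lemma J_upper {β : ℝ} (hβ0 : 0 < β) (hβ1 : β ≤ 1) : JJ β ≤ Real.log (1/β) + 2 := by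
  set h : ℝ → ℝ := fun z => Real.exp (β * (1 - Real.sqrt (1 + z ^ 2))) / Real.sqrt (1 + z ^ 2)
    with hh
  have hβinv : (1:ℝ) ≤ β⁻¹ := by
    have h1 : β * β⁻¹ = 1 := mul_inv_cancel₀ hβ0.ne'
    nlinarith [inv_pos.2 hβ0]
  have hint := J_int hβ0
  have i1 : IntegrableOn h (Ioc 0 1) := hint.mono_set Ioc_subset_Ioi_self
  have i2 : IntegrableOn h (Ioc 1 β⁻¹) :=
    (hint.mono_set (Ioi_subset_Ioi zero_le_one)).mono_set Ioc_subset_Ioi_self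
  have i3 : IntegrableOn h (Ioi β⁻¹) :=
    hint.mono_set (Ioi_subset_Ioi (by positivity))
  have i23 : IntegrableOn h (Ioi 1) := hint.mono_set (Ioi_subset_Ioi zero_le_one)
  have hsplit : JJ β = (∫ z in Ioc (0:ℝ) 1, h z) + ((∫ z in Ioc (1:ℝ) β⁻¹, h z)
      + ∫ z in Ioi β⁻¹, h z) := by
    rw [JJ, ← setIntegral_union (Ioc_disjoint_Ioi le_rfl) measurableSet_Ioi i2 i3,
      Ioc_union_Ioi_eq_Ioi hβinv,
      ← setIntegral_union (Ioc_disjoint_Ioi le_rfl) measurableSet_Ioi i1 i23,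
      Ioc_union_Ioi_eq_Ioi zero_le_one]
  have p1 : (∫ z in Ioc (0:ℝ) 1, h z) ≤ 1 := by
    calc (∫ z in Ioc (0:ℝ) 1, h z) ≤ ∫ _z in Ioc (0:ℝ) 1, (1:ℝ) := by
          apply setIntegral_mono_on i1 (integrableOn_const measure_Ioc_lt_top.ne)
            measurableSet_Ioc
          intro z _
          exact J_integrand_le_one hβ0.le
      _ = 1 := by simp
  have p2 : (∫ z in Ioc (1:ℝ) β⁻¹, h z) ≤ Real.log (1/β) := by
    have hinv : IntegrableOn (fun z : ℝ => z⁻¹) (Ioc 1 β⁻¹) := by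
      have : IntervalIntegrable (fun z : ℝ => z⁻¹) volume 1 β⁻¹ := by
        apply intervalIntegral.intervalIntegrable_inv _ continuousOn_id
        intro x hx
        rcases hx with ⟨hx1, _⟩
        have : (0:ℝ) < x := lt_of_lt_of_le (lt_min one_pos (by positivity)) hx1
        exact this.ne'
      exact this.1
    calc (∫ z in Ioc (1:ℝ) β⁻¹, h z) ≤ ∫ z in Ioc (1:ℝ) β⁻¹, z⁻¹ := by
          apply setIntegral_mono_on i2 hinv measurableSet_Ioc
          intro z hz
          have hz0 : (0:ℝ) < z := lt_trans one_pos hz.1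
          have h2 : Real.exp (β * (1 - Real.sqrt (1 + z ^ 2))) ≤ 1 :=
            Real.exp_le_one_iff.2 (by nlinarith [one_le_sqrt_one_add_sq (z := z)])
          calc h z ≤ 1 / z :=
                div_le_div₀ zero_le_one h2 hz0 (le_sqrt_one_add_sq hz0.le)
            _ = z⁻¹ := one_div z
      _ = Real.log (1/β) := by
          rw [← intervalIntegral.integral_of_le hβinv, integral_inv (by
            rw [Set.uIcc_of_le hβinv]
            intro hmem
            exact absurd hmem.1 (by norm_num)), div_one, one_div, Real.log_inv]
  have p3 : (∫ z in Ioi β⁻¹, h z) ≤ 1 := by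
    have hbint : IntegrableOn (fun z : ℝ => (Real.exp β * β) * Real.exp (-(β * z)))
        (Ioi β⁻¹) := by
      have := (exp_neg_integrableOn_Ioi β⁻¹ hβ0).const_mul (Real.exp β * β)
      simp only [neg_mul] at this; exact this
    have hmono : (∫ z in Ioi β⁻¹, h z)
        ≤ ∫ z in Ioi β⁻¹, (Real.exp β * β) * Real.exp (-(β * z)) := by
      apply setIntegral_mono_on i3 hbint measurableSet_Ioi
      intro z hz
      have hz0 : (0:ℝ) < z := lt_of_le_of_lt (by positivity) hz
      have hzinv : z⁻¹ ≤ β := by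
        have h4 := inv_anti₀ (inv_pos.2 hβ0) hz.le
        rwa [inv_inv] at h4
      have hzs := le_sqrt_one_add_sq hz0.le
      calc h z ≤ Real.exp (β * (1 - z)) / z := by
            apply div_le_div₀ (Real.exp_pos _).le _ hz0 hzs
            apply Real.exp_le_exp.2
            nlinarith
        _ = Real.exp (β * (1 - z)) * z⁻¹ := by rw [div_eq_mul_inv]
        _ ≤ Real.exp (β * (1 - z)) * β :=
            mul_le_mul_of_nonneg_left hzinv (Real.exp_pos _).le
        _ = (Real.exp β * β) * Real.exp (-(β * z)) := by
            rw [show β * (1 - z) = β + -(β * z) from by ring, Real.exp_add]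
            ring
    have hcomp : (∫ z in Ioi β⁻¹, Real.exp (-(β * z))) = β⁻¹ * Real.exp (-1) := by
      have := integral_comp_mul_left_Ioi (fun x => Real.exp (-x)) β⁻¹ hβ0
      simp only [smul_eq_mul] at this
      rw [this, mul_inv_cancel₀ hβ0.ne', integral_exp_neg_Ioi]
    calc (∫ z in Ioi β⁻¹, h z) ≤ ∫ z in Ioi β⁻¹, (Real.exp β * β) * Real.exp (-(β * z)) := hmono
      _ = (Real.exp β * β) * (β⁻¹ * Real.exp (-1)) := by rw [integral_const_mul, hcomp]
      _ = Real.exp β * Real.exp (-1) := by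
          field_simp
      _ = Real.exp (β - 1) := by rw [← Real.exp_add]; ring_nf
      _ ≤ 1 := Real.exp_le_one_iff.2 (by linarith)
  linarith [hsplit, p1, p2, p3]

lemma J_lower {δ β : ℝ} (hδ0 : 0 < δ) (hδ1 : δ ≤ 1) (hβ0 : 0 < β) (hβδ : β < δ) :
    Real.exp (-δ) * (Real.log δ + Real.log (1/β)) ≤ JJ β := by
  set h : ℝ → ℝ := fun z => Real.exp (β * (1 - Real.sqrt (1 + z ^ 2))) / Real.sqrt (1 + z ^ 2)
    with hh
  set c : ℝ := δ / β with hc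
  have hc1 : 1 < c := (one_lt_div hβ0).mpr hβδ
  have hc0 : 0 < c := lt_trans one_pos hc1
  have ilhs : IntegrableOn (fun z : ℝ => Real.exp (-δ) * (1 + z)⁻¹) (Ioc 0 c) := by
    have hcont : ContinuousOn (fun z : ℝ => Real.exp (-δ) * (1 + z)⁻¹) (Icc 0 c) := by
      apply ContinuousOn.mul continuousOn_const
      apply ContinuousOn.inv₀ (continuousOn_const.add continuousOn_id)
      intro z hz
      have : (0:ℝ) ≤ z := hz.1
      show (1:ℝ) + z ≠ 0; positivity
    exact (hcont.integrableOn_Icc).mono_set Ioc_subset_Icc_self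
  have irhs : IntegrableOn h (Ioc 0 c) := (J_int hβ0).mono_set Ioc_subset_Ioi_self
  have step2 : (∫ z in Ioc (0:ℝ) c, Real.exp (-δ) * (1 + z)⁻¹) ≤ ∫ z in Ioc (0:ℝ) c, h z := by
    apply setIntegral_mono_on ilhs irhs measurableSet_Ioc
    intro z hz
    have hz0 : 0 < z := hz.1
    have hzβ : z * β ≤ δ := (le_div_iff₀ hβ0).mp hz.2
    have hs1 := sqrt_one_add_sq_le hz0.le
    have hs0 := sqrt_one_add_sq_pos (z := z)
    have hexp : Real.exp (-δ) ≤ Real.exp (β * (1 - Real.sqrt (1 + z ^ 2))) := by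
      apply Real.exp_le_exp.2
      nlinarith
    rw [← div_eq_mul_inv]
    exact div_le_div₀ (Real.exp_pos _).le hexp hs0 hs1
  have step1 : (∫ z in Ioc (0:ℝ) c, h z) ≤ JJ β := by
    apply setIntegral_mono_set (J_int hβ0) _ (HasSubset.Subset.eventuallyLE Ioc_subset_Ioi_self)
    filter_upwards [ae_restrict_mem measurableSet_Ioi] with z _
    exact J_integrand_nonneg
  have step3 : (∫ z in Ioc (0:ℝ) c, Real.exp (-δ) * (1 + z)⁻¹)
      = Real.exp (-δ) * Real.log (1 + c) := by
    rw [integral_const_mul]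
    congr 1
    rw [← intervalIntegral.integral_of_le hc0.le]
    have := intervalIntegral.integral_comp_add_left (a := (0:ℝ)) (b := c)
      (fun x : ℝ => x⁻¹) 1
    rw [this, add_zero, integral_inv (by
      rw [Set.uIcc_of_le (by linarith : (1:ℝ) ≤ 1 + c)]
      intro hmem
      have := hmem.1
      norm_num at this), div_one]
  have step4 : Real.exp (-δ) * (Real.log δ + Real.log (1/β))
      ≤ Real.exp (-δ) * Real.log (1 + c) := by
    apply mul_le_mul_of_nonneg_left _ (Real.exp_pos _).le
    have h1 : Real.log c ≤ Real.log (1 + c) := Real.log_le_log hc0 (by linarith)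
    have h2 : Real.log c = Real.log δ - Real.log β := Real.log_div hδ0.ne' hβ0.ne'
    rw [one_div, Real.log_inv]
    linarith
  linarith [step1, step2, step3, step4]
set_option maxHeartbeats 1000000 in
lemma tendsto_J :
    Tendsto (fun β => JJ β / Real.log (1/β)) (nhdsWithin 0 (Ioi 0)) (nhds 1) := by
  rw [Metric.tendsto_nhds]
  intro ε hε
  set δ : ℝ := min (ε/4) 2⁻¹ with hδ
  have hδ0 : 0 < δ := lt_min (by linarith) (by norm_num)
  have hδ1 : δ ≤ 2⁻¹ := min_le_right _ _
  have hδε : δ ≤ ε/4 := min_le_left _ _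
  have hlogδ : Real.log δ < 0 := Real.log_neg hδ0 (by linarith [hδ1])
  set a : ℝ := -Real.log δ with ha
  have ha0 : 0 < a := by simp only [ha]; linarith
  set M : ℝ := (1 + a) * (8/ε + 8) with hM
  have hM0 : 0 < M := by positivity
  have hMa : a * (8/ε) ≤ M := by
    have h8 : (0:ℝ) < 8/ε := by positivity
    nlinarith
  have hMa8 : a * 8 ≤ M := by nlinarith [div_pos (by norm_num : (0:ℝ) < 8) hε]
  have hM8 : 8/ε ≤ M := by nlinarith [div_pos (by norm_num : (0:ℝ) < 8) hε]
  set r : ℝ := min δ (Real.exp (-M)) with hr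
  have hr0 : 0 < r := lt_min hδ0 (Real.exp_pos _)
  filter_upwards [Ioo_mem_nhdsGT_of_mem (show (0:ℝ) ∈ Ico 0 r from ⟨le_refl 0, hr0⟩)]
    with β hβ
  obtain ⟨hβ0, hβr⟩ := hβ
  have hβδ : β < δ := lt_of_lt_of_le hβr (min_le_left _ _)
  have hβ1 : β ≤ 1 := by
    have := hδ1
    linarith
  set l : ℝ := Real.log (1/β) with hl
  have hlM : M < l := by
    have h1 : β < Real.exp (-M) := lt_of_lt_of_le hβr (min_le_right _ _)
    have h2 : Real.log β < -M := by
      calc Real.log β < Real.log (Real.exp (-M)) := Real.log_lt_log hβ0 h1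
        _ = -M := Real.log_exp _
    simp only [hl, one_div, Real.log_inv]
    linarith
  have hl0 : 0 < l := lt_trans hM0 hlM
  clear_value l
  have hu : JJ β ≤ l + 2 := by rw [hl]; exact J_upper hβ0 hβ1
  have hlow : Real.exp (-δ) * (-a + l) ≤ JJ β := by
    have h5 := J_lower hδ0 (by linarith [hδ1]) hβ0 hβδ
    have heq : -a + l = Real.log δ + Real.log (1/β) := by simp only [ha, hl]; ring
    rw [heq]
    exact h5
  set Jv : ℝ := JJ β with hJv
  clear_value Jv
  have hexpδ : 1 - δ ≤ Real.exp (-δ) := by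
    have := Real.add_one_le_exp (-δ)
    linarith
  have hεl : 8 ≤ ε * l := by
    have h1 : 8/ε ≤ l := le_trans hM8 hlM.le
    calc (8:ℝ) = ε * (8/ε) := by field_simp
      _ ≤ ε * l := mul_le_mul_of_nonneg_left h1 hε.le
  have hal : a * 8 ≤ l := le_trans hMa8 hlM.le
  have haεl : 8 * a ≤ ε * l := by
    have h1 : a * (8/ε) ≤ l := le_trans hMa hlM.le
    have h2 : ε * (a * (8/ε)) = 8 * a := by field_simp
    nlinarith
  have h1 : Jv / l < 1 + ε := by
    rw [div_lt_iff₀ hl0]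
    nlinarith
  have h2 : 1 - ε < Jv / l := by
    rw [lt_div_iff₀ hl0]
    nlinarith [hlow, hexpδ, hδ0.le, ha0.le, hal,
      mul_le_mul_of_nonneg_right hexpδ (show (0:ℝ) ≤ -a + l by nlinarith),
      mul_nonneg (show (0:ℝ) ≤ ε/4 - δ by linarith) hl0.le]
  rw [Real.dist_eq, abs_sub_lt_iff]
  constructor <;> linarith
/-- As β → 0⁺, the limiting variance Σ_β² = K_β/J_β of the one-dimensional Dunkel–Hänggi
diffusion satisfies Σ_β² ∼ A / log(1/β) with A = 2 ∫₀^∞ (∫_x^∞ e^{−u} u⁻¹ du)² eˣ dx,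
i.e. log(1/β) K_β / J_β → A. -/
theorem stmt18 :
    Tendsto (fun β : ℝ => Real.log (1 / β) *
        (2 * β * ∫ x in Ioi (0:ℝ),
          (∫ y in Ioi x, y * Real.exp (β * (1 - Real.sqrt (1 + y ^ 2))) / (1 + y ^ 2)) ^ 2
            * Real.exp (β * (Real.sqrt (1 + x ^ 2) - 1)))
        / ∫ z in Ioi (0:ℝ), Real.exp (β * (1 - Real.sqrt (1 + z ^ 2))) / Real.sqrt (1 + z ^ 2))
      (nhdsWithin 0 (Ioi 0))
      (nhds (2 * ∫ x in Ioi (0:ℝ), (∫ u in Ioi x, Real.exp (-u) * u⁻¹) ^ 2 * Real.exp x)) := by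
  have hKK : Tendsto (fun β : ℝ => 2 * ∫ t in Ioi (0:ℝ), FF β t) (nhdsWithin 0 (Ioi 0))
      (nhds (2 * ∫ x in Ioi (0:ℝ), (∫ u in Ioi x, Real.exp (-u) * u⁻¹) ^ 2 * Real.exp x)) :=
    tendsto_K.const_mul 2
  have hLJ : Tendsto (fun β : ℝ => Real.log (1/β) / JJ β) (nhdsWithin 0 (Ioi 0)) (nhds 1) := by
    have h := tendsto_J.inv₀ one_ne_zero
    rw [inv_one] at h
    refine h.congr fun β => ?_
    rw [inv_div]
  have hmul := hKK.mul hLJ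
  rw [mul_one] at hmul
  refine Tendsto.congr' ?_ hmul
  filter_upwards [self_mem_nhdsWithin] with β hβ
  rw [← outer_cov hβ]
  simp only [JJ]
  ring
end

section
/- For every β > 0 and every x ≥ 0, one has the integration-by-parts identity I_β(x) = e^{β(1−√(1+x²))} / (β √(1+x²)) − R_β(x), where R_β(x) := (1/β) ∫_x^∞ y e^{β(1−√(1+y²))} / (1+y²)^{3/2} dy satisfies 0 ≤ R_β(x) ≤ e^{β(1−√(1+x²))} / (β² (1+x²)). -/
open Filter MeasureTheory Set

private lemma sq1 (y : ℝ) : (0:ℝ) < 1 + y ^ 2 := by positivity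

private lemma spos (y : ℝ) : 0 < Real.sqrt (1 + y ^ 2) := Real.sqrt_pos.2 (sq1 y)

private lemma ssq (y : ℝ) : Real.sqrt (1 + y ^ 2) ^ 2 = 1 + y ^ 2 :=
  Real.sq_sqrt (sq1 y).le

private lemma rpow32 (y : ℝ) :
    (1 + y ^ 2) ^ ((3:ℝ)/2) = Real.sqrt (1 + y ^ 2) ^ 3 := by
  rw [show (3:ℝ)/2 = (1/2)*3 by ring, Real.rpow_mul (sq1 y).le, ← Real.sqrt_eq_rpow,
    ← Real.rpow_natCast (Real.sqrt (1 + y ^ 2)) 3]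
  norm_num

private lemma hasDerivAt_s (y : ℝ) :
    HasDerivAt (fun y : ℝ => Real.sqrt (1 + y ^ 2)) (y / Real.sqrt (1 + y ^ 2)) y := by
  have h : HasDerivAt (fun y : ℝ => 1 + y ^ 2) (2 * y) y := by
    simpa using (hasDerivAt_pow 2 y).const_add 1
  have := (Real.hasDerivAt_sqrt (sq1 y).ne').comp y h
  refine this.congr_deriv ?_
  field_simp

private lemma hasDerivAt_g (β y : ℝ) :
    HasDerivAt (fun y : ℝ => Real.exp (β * (1 - Real.sqrt (1 + y ^ 2))))
      (Real.exp (β * (1 - Real.sqrt (1 + y ^ 2))) * (β * -(y / Real.sqrt (1 + y ^ 2)))) y :=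
  (((hasDerivAt_s y).const_sub 1).const_mul β).exp

private lemma cont_sq1 : Continuous (fun y : ℝ => 1 + y ^ 2) :=
  continuous_const.add (continuous_pow 2)

private lemma cont_s : Continuous (fun y : ℝ => Real.sqrt (1 + y ^ 2)) :=
  Real.continuous_sqrt.comp cont_sq1

private lemma cont_g (β : ℝ) :
    Continuous (fun y : ℝ => Real.exp (β * (1 - Real.sqrt (1 + y ^ 2)))) :=
  Real.continuous_exp.comp (continuous_const.mul (continuous_const.sub cont_s))

private lemma s_tendsto : Tendsto (fun y : ℝ => Real.sqrt (1 + y ^ 2)) atTop atTop := by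
  apply tendsto_atTop_mono (fun y => ?_) tendsto_id
  calc (y:ℝ) ≤ |y| := le_abs_self y
  _ = Real.sqrt (y ^ 2) := (Real.sqrt_sq_eq_abs y).symm
  _ ≤ Real.sqrt (1 + y ^ 2) := Real.sqrt_le_sqrt (by nlinarith)

private lemma g_tendsto (β : ℝ) (hβ : 0 < β) :
    Tendsto (fun y : ℝ => Real.exp (β * (1 - Real.sqrt (1 + y ^ 2)))) atTop (nhds 0) := by
  apply Real.tendsto_exp_atBot.comp
  apply Tendsto.const_mul_atBot hβ
  have : Tendsto (fun y : ℝ => 1 + -Real.sqrt (1 + y ^ 2)) atTop atBot := by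
    apply tendsto_atBot_add_const_left
    exact tendsto_neg_atBot_iff.2 s_tendsto
  simpa [sub_eq_add_neg] using this

/-- Integration by parts for I_β: for β > 0 and x ≥ 0,
I_β(x) = e^{β(1−√(1+x²))}/(β√(1+x²)) − R_β(x), where
R_β(x) = (1/β) ∫_x^∞ y e^{β(1−√(1+y²))}/(1+y²)^{3/2} dy satisfies
0 ≤ R_β(x) ≤ e^{β(1−√(1+x²))}/(β²(1+x²)). -/
theorem stmt19 (β : ℝ) (hβ : 0 < β) (x : ℝ) (hx : 0 ≤ x)
    (I R : ℝ → ℝ)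
    (hI : ∀ t, I t = ∫ y in Ioi t, y * Real.exp (β * (1 - Real.sqrt (1 + y ^ 2))) / (1 + y ^ 2))
    (hR : ∀ t, R t = (1 / β) * ∫ y in Ioi t,
        y * Real.exp (β * (1 - Real.sqrt (1 + y ^ 2))) / (1 + y ^ 2) ^ ((3:ℝ)/2)) :
    I x = Real.exp (β * (1 - Real.sqrt (1 + x ^ 2))) / (β * Real.sqrt (1 + x ^ 2)) - R x ∧
    0 ≤ R x ∧
    R x ≤ Real.exp (β * (1 - Real.sqrt (1 + x ^ 2))) / (β ^ 2 * (1 + x ^ 2)) := by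
  set g : ℝ → ℝ := fun y => Real.exp (β * (1 - Real.sqrt (1 + y ^ 2))) with hgdef
  set s : ℝ → ℝ := fun y => Real.sqrt (1 + y ^ 2) with hsdef
  set A : ℝ → ℝ := fun y => y * g y / (1 + y ^ 2) with hA
  set B : ℝ → ℝ := fun y => y * g y / (1 + y ^ 2) ^ ((3:ℝ)/2) with hB
  set D : ℝ → ℝ := fun y => y * g y / s y with hD
  set F : ℝ → ℝ := fun y => g y / (β * s y) with hF
  set G : ℝ → ℝ := fun y => -(1/β) * g y with hG
  have gpos : ∀ y, 0 < g y := fun y => Real.exp_pos _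
  have hFderiv : ∀ y : ℝ, HasDerivAt F (-(A y + (1/β) * B y)) y := by
    intro y
    have hd : HasDerivAt (fun y => β * s y) (β * (y / s y)) y := (hasDerivAt_s y).const_mul β
    have hne : β * s y ≠ 0 := by have := spos y; positivity
    have := (hasDerivAt_g β y).div hd hne
    refine this.congr_deriv ?_
    simp only [hA, hB, hD, hgdef, hsdef]
    rw [rpow32 y]
    set S := Real.sqrt (1 + y ^ 2) with hSdef
    have hS2 : (1:ℝ) + y ^ 2 = S ^ 2 := (ssq y).symm
    have hSne : S ≠ 0 := (spos y).ne'
    rw [hS2]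
    field_simp
    ring
  have hGderiv : ∀ y : ℝ, HasDerivAt G (D y) y := by
    intro y
    have := (hasDerivAt_g β y).const_mul (-(1/β))
    refine this.congr_deriv ?_
    simp only [hD, hG, hgdef, hsdef]
    have hSne : Real.sqrt (1 + y ^ 2) ≠ 0 := (spos y).ne'
    field_simp
  have hFtend : Tendsto F atTop (nhds 0) := by
    have h1 : Tendsto (fun y => β * s y) atTop atTop :=
      Tendsto.const_mul_atTop hβ (by simpa [hsdef] using s_tendsto)
    have h2 : Tendsto g atTop (nhds 0) := by simpa [hgdef] using g_tendsto β hβ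
    have := h2.mul h1.inv_tendsto_atTop
    simpa [hF, div_eq_mul_inv] using this
  have hGtend : Tendsto G atTop (nhds 0) := by
    have h2 : Tendsto g atTop (nhds 0) := by simpa [hgdef] using g_tendsto β hβ
    have := h2.const_mul (-(1/β))
    simpa [hG] using this
  have hApos : ∀ y ∈ Ioi x, 0 ≤ A y := by
    intro y hy
    have : (0:ℝ) < y := lt_of_le_of_lt hx hy
    have := gpos y
    rw [hA]; positivity
  have hBpos : ∀ y ∈ Ioi x, 0 ≤ B y := by
    intro y hy
    have : (0:ℝ) < y := lt_of_le_of_lt hx hy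
    have h1 := gpos y
    have h2 := sq1 y
    rw [hB]; positivity
  have hDpos : ∀ y ∈ Ioi x, 0 ≤ D y := by
    intro y hy
    have : (0:ℝ) < y := lt_of_le_of_lt hx hy
    have h1 := gpos y
    have h2 : 0 < s y := spos y
    rw [hD]; positivity
  have hF'neg : ∀ y ∈ Ioi x, -(A y + (1/β) * B y) ≤ 0 := by
    intro y hy
    have h1 := hApos y hy
    have h2 := hBpos y hy
    have h3 : 0 ≤ (1/β) * B y := by positivity
    linarith
  have hF'int : IntegrableOn (fun y => -(A y + (1/β) * B y)) (Ioi x) :=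
    integrableOn_Ioi_deriv_of_nonpos' (fun y _ => hFderiv y) hF'neg hFtend
  have hTint : IntegrableOn (fun y => A y + (1/β) * B y) (Ioi x) :=
    hF'int.neg.congr (Filter.Eventually.of_forall fun y => by simp)
  have hDint : IntegrableOn D (Ioi x) :=
    integrableOn_Ioi_deriv_of_nonneg' (fun y _ => hGderiv y) hDpos hGtend
  have hcont_A : Continuous A := by
    rw [hA]
    exact (continuous_id.mul (cont_g β)).div cont_sq1 (fun y => (sq1 y).ne')
  have hcont_B : Continuous B := by
    rw [hB]
    refine (continuous_id.mul (cont_g β)).div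
      (cont_sq1.rpow_const (fun y => Or.inl (sq1 y).ne')) (fun y => ?_)
    rw [rpow32 y]
    exact pow_ne_zero 3 (spos y).ne'
  have hAint : IntegrableOn A (Ioi x) := by
    apply Integrable.mono hTint hcont_A.aestronglyMeasurable.restrict
    filter_upwards [ae_restrict_mem measurableSet_Ioi] with y hy
    have h1 := hApos y hy
    have h2 := hBpos y hy
    have h3 : 0 ≤ (1/β) * B y := by positivity
    rw [Real.norm_eq_abs, Real.norm_eq_abs, abs_of_nonneg h1, abs_of_nonneg (by linarith)]
    linarith
  have hB2int : IntegrableOn (fun y => (1/β) * B y) (Ioi x) := by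
    apply Integrable.mono hTint ((continuous_const.mul hcont_B).aestronglyMeasurable.restrict)
    filter_upwards [ae_restrict_mem measurableSet_Ioi] with y hy
    have h1 := hApos y hy
    have h2 := hBpos y hy
    have h3 : 0 ≤ (1/β) * B y := by positivity
    simp only [Pi.mul_apply]
    rw [Real.norm_eq_abs, Real.norm_eq_abs, abs_of_nonneg h3, abs_of_nonneg (by linarith)]
    linarith
  have hBint : IntegrableOn B (Ioi x) := by
    have := hB2int.const_mul β
    have heq : (fun y => β * ((1/β) * B y)) = B := by
      funext y; field_simp
    rwa [heq] at this
  have hFTC : ∫ y in Ioi x, -(A y + (1/β) * B y) = 0 - F x :=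
    integral_Ioi_of_hasDerivAt_of_tendsto' (fun y _ => hFderiv y) hF'int hFtend
  have hT : ∫ y in Ioi x, (A y + (1/β) * B y) = F x := by
    have h := hFTC
    rw [integral_neg] at h
    linarith
  have hDeq : ∫ y in Ioi x, D y = (1/β) * g x := by
    have h := integral_Ioi_of_hasDerivAt_of_tendsto' (fun y _ => hGderiv y) hDint hGtend
    rw [h, hG]
    ring
  have hIx : I x = ∫ y in Ioi x, A y := hI x
  have hRx : R x = (1/β) * ∫ y in Ioi x, B y := hR x
  have hsplit : (∫ y in Ioi x, (A y + (1/β) * B y))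
      = (∫ y in Ioi x, A y) + (1/β) * ∫ y in Ioi x, B y := by
    rw [integral_add hAint hB2int, integral_const_mul]
  have hBnonneg : 0 ≤ ∫ y in Ioi x, B y :=
    setIntegral_nonneg measurableSet_Ioi hBpos
  have hRnonneg : 0 ≤ R x := by
    rw [hRx]; positivity
  have hBbound : (∫ y in Ioi x, B y) ≤ (∫ y in Ioi x, D y) / (1 + x ^ 2) := by
    have hDi : IntegrableOn (fun y => D y / (1 + x ^ 2)) (Ioi x) := hDint.div_const _
    have hmono := setIntegral_mono_on hBint hDi measurableSet_Ioi (fun y hy => ?_)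
    · rwa [integral_div] at hmono
    · have hyx : x < y := hy
      have hy0 : (0:ℝ) < y := lt_of_le_of_lt hx hyx
      have hD0 := hDpos y hy
      have hle : (1:ℝ) + x ^ 2 ≤ 1 + y ^ 2 := by nlinarith
      have hBD : B y = D y / (1 + y ^ 2) := by
        simp only [hB, hD, hgdef, hsdef]
        rw [rpow32 y]
        set S := Real.sqrt (1 + y ^ 2) with hSdef
        have hS2 : (1:ℝ) + y ^ 2 = S ^ 2 := (ssq y).symm
        have hSne : S ≠ 0 := (spos y).ne'
        rw [hS2]
        field_simp
      rw [hBD]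
      gcongr
  refine ⟨?_, hRnonneg, ?_⟩
  · rw [hIx, hRx]
    have hFx : F x = Real.exp (β * (1 - Real.sqrt (1 + x ^ 2))) / (β * Real.sqrt (1 + x ^ 2)) :=
      rfl
    rw [← hFx]
    linarith [hsplit, hT]
  · rw [hRx]
    have h1 : (1/β) * (∫ y in Ioi x, B y) ≤ (1/β) * ((∫ y in Ioi x, D y) / (1 + x ^ 2)) :=
      mul_le_mul_of_nonneg_left hBbound (by positivity)
    rw [hDeq] at h1
    have hgx : g x = Real.exp (β * (1 - Real.sqrt (1 + x ^ 2))) := rfl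
    calc (1/β) * ∫ y in Ioi x, B y ≤ (1/β) * ((1/β) * g x / (1 + x ^ 2)) := h1
    _ = Real.exp (β * (1 - Real.sqrt (1 + x ^ 2))) / (β ^ 2 * (1 + x ^ 2)) := by
        rw [hgx]
        have h2 := sq1 x
        field_simp
end
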